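/- The transformation r4 of the quantum degenerate Garnier system G(1,1,3) is a quantum canonical transformation: suppose y1 is a unit of R, and define q1 = −x1y1^2 − x2y1y2 + 2y1^{-1}(y2 + 1) + α4·y1 − 2t1, p1 = y1^{-1}, q2 = x2y1 + 2y1^{-1}(y2 + 1) − 2t2, p2 = y2y1^{-1}. Then (q1, p1, q2, p2) again satisfy the canonical commutation relations: [q1,p1] = [q2,p2] = h and [q1,q2] = [p1,p2] = [q1,p2] = [q2,p1] = 0. -/
import Mathlib

section aux
variable {R : Type*} [Ring R]

lemma swA {a b c : R} (H : b * a = a * b + c) (t : R) :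
    b * (a * t) = a * (b * t) + c * t := by
  rw [← mul_assoc, H, add_mul, mul_assoc]

lemma swC {a b : R} (H : b * a = a * b) (t : R) :
    b * (a * t) = a * (b * t) := by
  rw [← mul_assoc, H, mul_assoc]

lemma swS {a b c : R} (H : b * a = a * b - c) (t : R) :
    b * (a * t) = a * (b * t) - c * t := by
  rw [← mul_assoc, H, sub_mul, mul_assoc]

end aux

theorem quantum_garnier_G113_r4_canonical
    {R : Type*} [Ring R]
    (h α4 t1 t2 : R)
    (hh : ∀ r : R, h * r = r * h)
    (hA4 : ∀ r : R, α4 * r = r * α4)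
    (ht1 : ∀ r : R, t1 * r = r * t1)
    (ht2 : ∀ r : R, t2 * r = r * t2)
    (x1 y1 x2 y2 : R)
    (hx1y1 : x1 * y1 - y1 * x1 = h)
    (hx2y2 : x2 * y2 - y2 * x2 = h)
    (hx1x2 : x1 * x2 - x2 * x1 = 0)
    (hy1y2 : y1 * y2 - y2 * y1 = 0)
    (hx1y2 : x1 * y2 - y2 * x1 = 0)
    (hx2y1 : x2 * y1 - y1 * x2 = 0)
    (y1i : R) (hy1il : y1i * y1 = 1) (hy1ir : y1 * y1i = 1)
    (q1 p1 q2 p2 : R)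
    (hq1 : q1 = -(x1 * y1^2) - x2 * y1 * y2 + 2 * y1i * (y2 + 1) + α4 * y1 - 2 * t1)
    (hp1 : p1 = y1i)
    (hq2 : q2 = x2 * y1 + 2 * y1i * (y2 + 1) - 2 * t2)
    (hp2 : p2 = y2 * y1i) :
    q1 * p1 - p1 * q1 = h ∧ q2 * p2 - p2 * q2 = h ∧
    q1 * q2 - q2 * q1 = 0 ∧ p1 * p2 - p2 * p1 = 0 ∧
    q1 * p2 - p2 * q1 = 0 ∧ q2 * p1 - p1 * q2 = 0 := by
  -- basic reordering facts
  have ey1x1 : y1 * x1 = x1 * y1 - h := by rw [← hx1y1]; abel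
  have ey2x2 : y2 * x2 = x2 * y2 - h := by rw [← hx2y2]; abel
  have ex2x1 : x2 * x1 = x1 * x2 := by have := sub_eq_zero.mp hx1x2; exact this.symm
  have ey2y1 : y2 * y1 = y1 * y2 := (sub_eq_zero.mp hy1y2).symm
  have ey2x1 : y2 * x1 = x1 * y2 := (sub_eq_zero.mp hx1y2).symm
  have ey1x2 : y1 * x2 = x2 * y1 := (sub_eq_zero.mp hx2y1).symm
  have ey1ix2 : y1i * x2 = x2 * y1i := by
    calc y1i * x2 = y1i * x2 * (y1 * y1i) := by rw [hy1ir, mul_one]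
      _ = y1i * (x2 * y1) * y1i := by rw [← mul_assoc, mul_assoc y1i x2 y1]
      _ = y1i * (y1 * x2) * y1i := by rw [ey1x2]
      _ = x2 * y1i := by rw [← mul_assoc, hy1il, one_mul]
  have ey1iy2 : y1i * y2 = y2 * y1i := by
    calc y1i * y2 = y1i * y2 * (y1 * y1i) := by rw [hy1ir, mul_one]
      _ = y1i * (y2 * y1) * y1i := by rw [← mul_assoc, mul_assoc y1i y2 y1]
      _ = y1i * (y1 * y2) * y1i := by rw [ey2y1]
      _ = y2 * y1i := by rw [← mul_assoc, hy1il, one_mul]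
  have ey1ix1 : y1i * x1 = x1 * y1i + h * (y1i * y1i) := by
    have e : x1 * y1 = y1 * x1 + h := by rw [← hx1y1]; abel
    calc y1i * x1 = y1i * (x1 * y1) * y1i := by
          rw [mul_assoc y1i (x1*y1) y1i, mul_assoc, hy1ir, mul_one]
      _ = y1i * (y1 * x1 + h) * y1i := by rw [e]
      _ = x1 * y1i + h * (y1i * y1i) := by
          rw [mul_add, add_mul, ← mul_assoc, hy1il, one_mul, ← hh y1i, mul_assoc]
  have ey2y1i : y2 * y1i = y1i * y2 := ey1iy2.symm
  have il3 : ∀ t : R, y1i * (y1 * t) = t := fun t => by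
    rw [← mul_assoc, hy1il, one_mul]
  have ir3 : ∀ t : R, y1 * (y1i * t) = t := fun t => by
    rw [← mul_assoc, hy1ir, one_mul]
  -- scalar commutation
  have c2 : ∀ a : R, a * 2 = 2 * a := fun a => (mul_two a).trans (two_mul a).symm
  -- substitute and normalize
  refine ⟨?_, ?_, ?_, ?_, ?_, ?_⟩ <;>
  · simp only [hq1, hp1, hq2, hp2]
    simp only [pow_two, mul_add, add_mul, mul_sub, sub_mul, mul_neg, neg_mul,
      mul_one, one_mul, mul_assoc,
      ey1x1, ey2x2, ex2x1, ey2y1, ey2x1, ey1x2, ey1ix2, ey2y1i, ey1ix1,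
      hy1il, hy1ir, il3, ir3,
      swS ey1x1, swS ey2x2, swC ex2x1, swC ey2y1, swC ey2x1, swC ey1x2,
      swC ey1ix2, swC ey2y1i, swA ey1ix1,
      (hh x1).symm,
      swC (hh x1).symm,
      (hA4 x1).symm,
      swC (hA4 x1).symm,
      (ht1 x1).symm,
      swC (ht1 x1).symm,
      (ht2 x1).symm,
      swC (ht2 x1).symm,
      (hh x2).symm,
      swC (hh x2).symm,
      (hA4 x2).symm,
      swC (hA4 x2).symm,
      (ht1 x2).symm,
      swC (ht1 x2).symm,
      (ht2 x2).symm,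
      swC (ht2 x2).symm,
      (hh y1).symm,
      swC (hh y1).symm,
      (hA4 y1).symm,
      swC (hA4 y1).symm,
      (ht1 y1).symm,
      swC (ht1 y1).symm,
      (ht2 y1).symm,
      swC (ht2 y1).symm,
      (hh y2).symm,
      swC (hh y2).symm,
      (hA4 y2).symm,
      swC (hA4 y2).symm,
      (ht1 y2).symm,
      swC (ht1 y2).symm,
      (ht2 y2).symm,
      swC (ht2 y2).symm,
      (hh y1i).symm,
      swC (hh y1i).symm,
      (hA4 y1i).symm,
      swC (hA4 y1i).symm,
      (ht1 y1i).symm,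
      swC (ht1 y1i).symm,
      (ht2 y1i).symm,
      swC (ht2 y1i).symm,
      (hh α4).symm,
      swC (hh α4).symm,
      (hh t1).symm,
      swC (hh t1).symm,
      (hh t2).symm,
      swC (hh t2).symm,
      (hA4 t1).symm,
      swC (hA4 t1).symm,
      (hA4 t2).symm,
      swC (hA4 t2).symm,
      (ht1 t2).symm,
      swC (ht1 t2).symm,
      c2 x1,
      swC (c2 x1),
      c2 x2,
      swC (c2 x2),
      c2 y1,
      swC (c2 y1),
      c2 y2,
      swC (c2 y2),
      c2 y1i,
      swC (c2 y1i),
      c2 h,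
      swC (c2 h),
      c2 α4,
      swC (c2 α4),
      c2 t1,
      swC (c2 t1),
      c2 t2,
      swC (c2 t2)]
    abel
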